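/- arXiv:0805.4432 — 6 statements merged into one kernel-verified Lean document; each statement's English description precedes it below -/
import Mathlib

section
/- (Mackey formula for coinvariants.) Let G be a finite group, H ≤ G, R a commutative ring, and M an R-module with R-linear G-action. Let D ⊆ G be a set of representatives for the double cosets H\G/H. Then the composition tr ∘ π : M_H → M_G → M_H of the natural projection with the transfer equals Σ_{x ∈ D} (c_x ∘ tr_x), where tr_x : M_H → M_{H ∩ x⁻¹Hx} is the transfer for the subgroup H ∩ x⁻¹Hx of H, and c_x : M_{H ∩ x⁻¹Hx} → M_H is the map sending [m] to [x•m] (which is well defined). -/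
variable {G : Type*} [Group G] [Fintype G] {R : Type*} [CommRing R]
  {M : Type*} [AddCommGroup M] [Module R M]
  [DistribMulAction G M] [SMulCommClass G R M]

/-- The submodule of `M` generated by the elements `m - k • m` for `k ∈ K`,
so that `M ⧸ coinvAug R M K` is the module of `K`-coinvariants. -/
def coinvAug (R M : Type*) {G : Type*} [Group G] [CommRing R] [AddCommGroup M]
    [Module R M] [DistribMulAction G M] [SMulCommClass G R M] (K : Subgroup G) :
    Submodule R M :=
  Submodule.span R {x : M | ∃ (m : M) (k : G), k ∈ K ∧ x = m - k • m}

/-- The natural projection `M_H → M_G` induced by the identity of `M`. -/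
def coinvProj (R M : Type*) {G : Type*} [Group G] [CommRing R] [AddCommGroup M]
    [Module R M] [DistribMulAction G M] [SMulCommClass G R M] (H : Subgroup G) :
    (M ⧸ coinvAug R M H) →ₗ[R] M ⧸ coinvAug R M (⊤ : Subgroup G) :=
  Submodule.mapQ _ _ LinearMap.id
    (by
      rw [Submodule.comap_id]
      exact Submodule.span_mono fun x hx => by
        obtain ⟨m, k, _, e⟩ := hx
        exact ⟨m, k, Subgroup.mem_top k, e⟩)

/-- The subgroup `H ∩ x⁻¹Hx` of `G`. -/
def conjInter {G : Type*} [Group G] (H : Subgroup G) (x : G) : Subgroup G :=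
  H ⊓ Subgroup.comap (MulAut.conj x).toMonoidHom H

lemma mk_smul_eq_of_mem {K : Subgroup G} {h : G} (hh : h ∈ K) (m : M) :
    (Submodule.Quotient.mk (h • m) : M ⧸ coinvAug R M K) = Submodule.Quotient.mk m := by
  rw [Submodule.Quotient.eq]
  have : h • m - m = -(m - h • m) := by abel
  rw [this]
  exact Submodule.neg_mem _ (Submodule.subset_span ⟨m, h, hh, rfl⟩)

/-- Mackey formula for coinvariants: if `D` is a set of representatives of the
double cosets `H\G/H`, `tr : M_G → M_H` is the transfer, `π : M_H → M_G` the
natural projection, `trx x : M_H → M_{H ∩ x⁻¹Hx}` the transfer for the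
subgroup `H ∩ x⁻¹Hx` of `H`, and `cx x : M_{H ∩ x⁻¹Hx} → M_H` the map
`[m] ↦ [x • m]`, then `tr ∘ π = ∑_{x ∈ D} cx x ∘ trx x`. -/
theorem mackey_coinvariants (H : Subgroup G)
    (D : Finset G)
    (hD : ∀ g : G, ∃! x, x ∈ D ∧ ∃ h₁ ∈ H, ∃ h₂ ∈ H, g = h₁ * x * h₂)
    (S : Finset G) (hS : ∀ g : G, ∃! s, s ∈ S ∧ g * s⁻¹ ∈ H)
    (Sx : G → Finset G)
    (hSx : ∀ x ∈ D, (∀ s ∈ Sx x, s ∈ H) ∧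
      ∀ h ∈ H, ∃! s, s ∈ Sx x ∧ h * s⁻¹ ∈ conjInter H x)
    (tr : (M ⧸ coinvAug R M (⊤ : Subgroup G)) →ₗ[R] M ⧸ coinvAug R M H)
    (htr : ∀ m : M, tr (Submodule.Quotient.mk m) =
      ∑ s ∈ S, (Submodule.Quotient.mk (s • m) : M ⧸ coinvAug R M H))
    (trx : (x : G) → (M ⧸ coinvAug R M H) →ₗ[R] M ⧸ coinvAug R M (conjInter H x))
    (htrx : ∀ x ∈ D, ∀ m : M, trx x (Submodule.Quotient.mk m) =
      ∑ s ∈ Sx x, (Submodule.Quotient.mk (s • m) : M ⧸ coinvAug R M (conjInter H x)))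
    (cx : (x : G) → (M ⧸ coinvAug R M (conjInter H x)) →ₗ[R] M ⧸ coinvAug R M H)
    (hcx : ∀ (x : G) (m : M),
      cx x (Submodule.Quotient.mk m) = Submodule.Quotient.mk (x • m)) :
    tr.comp (coinvProj R M H) = ∑ x ∈ D, (cx x).comp (trx x) := by
  classical
  apply LinearMap.ext
  intro q
  obtain ⟨m, rfl⟩ := Submodule.Quotient.mk_surjective _ q
  have hproj : coinvProj R M H (Submodule.Quotient.mk m) = Submodule.Quotient.mk m := rfl
  rw [LinearMap.comp_apply, hproj, htr, LinearMap.sum_apply]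
  have hRHS : ∀ x ∈ D, ((cx x).comp (trx x)) (Submodule.Quotient.mk m)
      = ∑ t ∈ Sx x, (Submodule.Quotient.mk ((x * t) • m) : M ⧸ coinvAug R M H) := by
    intro x hx
    rw [LinearMap.comp_apply, htrx x hx, map_sum]
    exact Finset.sum_congr rfl fun t _ => by rw [hcx, mul_smul]
  rw [Finset.sum_congr rfl hRHS, Finset.sum_sigma']
  refine (Finset.sum_bij (fun (p : (_ : G) × G) _ => (hS (p.1 * p.2)).choose) ?_ ?_ ?_ ?_).symm
  · intro p hp
    exact ((hS (p.1 * p.2)).choose_spec.1).1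
  · -- injectivity
    intro p hp p' hp' heq
    rw [Finset.mem_sigma] at hp hp'
    obtain ⟨hx, ht⟩ := hp
    obtain ⟨hx', ht'⟩ := hp'
    set s := (hS (p.1 * p.2)).choose with hs
    have h1 : p.1 * p.2 * s⁻¹ ∈ H := ((hS (p.1 * p.2)).choose_spec.1).2
    have heq' : (hS (p.1 * p.2)).choose = (hS (p'.1 * p'.2)).choose := heq
    have h2 : p'.1 * p'.2 * s⁻¹ ∈ H := by
      rw [hs, heq']; exact ((hS (p'.1 * p'.2)).choose_spec.1).2
    have htH : p.2 ∈ H := (hSx p.1 hx).1 p.2 ht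
    have htH' : p'.2 ∈ H := (hSx p'.1 hx').1 p'.2 ht'
    -- p.1 * p.2 and p'.1 * p'.2 are in the same right H-coset
    have hcos : p.1 * p.2 * (p'.1 * p'.2)⁻¹ ∈ H := by
      have := H.mul_mem h1 (H.inv_mem h2)
      simpa [mul_assoc] using this
    -- hence p.1 and p'.1 are in the same double coset, so equal
    have hxeq : p.1 = p'.1 := by
      have u := hD p.1
      have e1 : p.1 ∈ D ∧ ∃ h₁ ∈ H, ∃ h₂ ∈ H, p.1 = h₁ * p.1 * h₂ :=
        ⟨hx, 1, H.one_mem, 1, H.one_mem, by group⟩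
      have e2 : p'.1 ∈ D ∧ ∃ h₁ ∈ H, ∃ h₂ ∈ H, p.1 = h₁ * p'.1 * h₂ := by
        refine ⟨hx', p.1 * p.2 * (p'.1 * p'.2)⁻¹, hcos, p'.2 * p.2⁻¹,
          H.mul_mem htH' (H.inv_mem htH), ?_⟩
        group
      exact u.unique e1 e2
    -- now p.2 = p'.2 by uniqueness in hSx
    have hconj : p.2 * p'.2⁻¹ ∈ conjInter H p.1 := by
      constructor
      · exact H.mul_mem htH (H.inv_mem htH')
      · show (MulAut.conj p.1) (p.2 * p'.2⁻¹) ∈ H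
        have : (MulAut.conj p.1) (p.2 * p'.2⁻¹) = p.1 * p.2 * (p'.1 * p'.2)⁻¹ := by
          rw [← hxeq]; simp [MulAut.conj_apply]; group
        rw [this]; exact hcos
    have u2 := (hSx p.1 hx).2 p.2 htH
    have e1 : p.2 ∈ Sx p.1 ∧ p.2 * p.2⁻¹ ∈ conjInter H p.1 := by
      exact ⟨ht, by simpa using (conjInter H p.1).one_mem⟩
    have e2 : p'.2 ∈ Sx p.1 ∧ p.2 * p'.2⁻¹ ∈ conjInter H p.1 :=
      ⟨hxeq ▸ ht', hconj⟩
    have hteq : p.2 = p'.2 := u2.unique e1 e2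
    exact Sigma.ext hxeq (by simpa using hteq)
  · -- surjectivity
    intro s hsS
    obtain ⟨x, ⟨hxD, h₁, hh₁, h₂, hh₂, hse⟩, _⟩ := hD s
    obtain ⟨t, ⟨htSx, htc⟩, _⟩ := (hSx x hxD).2 h₂ hh₂
    refine ⟨⟨x, t⟩, Finset.mem_sigma.mpr ⟨hxD, htSx⟩, ?_⟩
    -- srep (x * t) = s since x * t * s⁻¹ ∈ H
    have hmem : x * t * s⁻¹ ∈ H := by
      have hc : x * (h₂ * t⁻¹) * x⁻¹ ∈ H := htc.2
      have : x * t * s⁻¹ = (x * (h₂ * t⁻¹) * x⁻¹)⁻¹ * h₁⁻¹ := by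
        rw [hse]; group
      rw [this]
      exact H.mul_mem (H.inv_mem hc) (H.inv_mem hh₁)
    exact ((hS (x * t)).choose_spec.2 s ⟨hsS, hmem⟩).symm
  · -- values agree
    intro p hp
    set s := (hS (p.1 * p.2)).choose with hs
    have h1 : p.1 * p.2 * s⁻¹ ∈ H := ((hS (p.1 * p.2)).choose_spec.1).2
    have : p.1 * p.2 = (p.1 * p.2 * s⁻¹) * s := by group
    rw [this, mul_smul]
    exact mk_smul_eq_of_mem h1 (s • m)
end

section
/- For any types α and β and any natural number n, there is an equivalence between the n-th symmetric power of the sum type, Sym n (α ⊕ β), and the sigma type Σ_{i : Fin (n+1)}, Sym i α × Sym (n − i) β. In other words, an unordered n-tuple of elements of α ⊕ β is the same as a choice of i ≤ n together with an unordered i-tuple from α and an unordered (n−i)-tuple from β. -/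
namespace SymSumAux

variable {α β : Type*}

private def L (m : Multiset (α ⊕ β)) : Multiset α := m.filterMap Sum.getLeft?
private def R (m : Multiset (α ⊕ β)) : Multiset β := m.filterMap Sum.getRight?

private lemma card_L_add_card_R (m : Multiset (α ⊕ β)) :
    Multiset.card (L m) + Multiset.card (R m) = Multiset.card m := by
  induction m using Multiset.induction with
  | empty => rfl
  | cons a s ih =>
    cases a with
    | inl a =>
      simp only [L, R, Multiset.filterMap_cons_some _ _ _ (rfl : Sum.getLeft? (Sum.inl a) = some a),
        Multiset.filterMap_cons_none _ _ (rfl : Sum.getRight? (Sum.inl a) = none),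
        Multiset.card_cons] at *
      omega
    | inr b =>
      simp only [L, R, Multiset.filterMap_cons_none _ _ (rfl : Sum.getLeft? (Sum.inr b) = none),
        Multiset.filterMap_cons_some _ _ _ (rfl : Sum.getRight? (Sum.inr b) = some b),
        Multiset.card_cons] at *
      omega

private lemma recon (m : Multiset (α ⊕ β)) :
    (L m).map Sum.inl + (R m).map Sum.inr = m := by
  induction m using Multiset.induction with
  | empty => rfl
  | cons a s ih =>
    simp only [L, R] at ih
    cases a with
    | inl a =>
      rw [L, R, Multiset.filterMap_cons_some _ _ _ (rfl : Sum.getLeft? (Sum.inl a) = some a),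
        Multiset.filterMap_cons_none _ _ (rfl : Sum.getRight? (Sum.inl a) = none),
        Multiset.map_cons, Multiset.cons_add, ih]
    | inr b =>
      rw [L, R, Multiset.filterMap_cons_none _ _ (rfl : Sum.getLeft? (Sum.inr b) = none),
        Multiset.filterMap_cons_some _ _ _ (rfl : Sum.getRight? (Sum.inr b) = some b),
        Multiset.map_cons, ← Multiset.singleton_add, add_left_comm, Multiset.singleton_add, ih]

private lemma L_empty (t : Multiset β) : L ((t.map Sum.inr : Multiset (α ⊕ β))) = 0 := by
  induction t using Multiset.induction with
  | empty => rfl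
  | cons b t ih =>
    rw [Multiset.map_cons, L,
      Multiset.filterMap_cons_none _ _ (rfl : Sum.getLeft? (Sum.inr b) = none)]
    exact ih

private lemma R_empty (s : Multiset α) : R ((s.map Sum.inl : Multiset (α ⊕ β))) = 0 := by
  induction s using Multiset.induction with
  | empty => rfl
  | cons a s ih =>
    rw [Multiset.map_cons, R,
      Multiset.filterMap_cons_none _ _ (rfl : Sum.getRight? (Sum.inl a) = none)]
    exact ih

private lemma L_mix (s : Multiset α) (t : Multiset β) :
    L (s.map Sum.inl + t.map Sum.inr) = s := by
  induction s using Multiset.induction with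
  | empty => simpa using L_empty t
  | cons a s ih =>
    rw [Multiset.map_cons, Multiset.cons_add, L,
      Multiset.filterMap_cons_some _ _ _ (rfl : Sum.getLeft? (Sum.inl a) = some a)]
    rw [L] at ih
    rw [ih]

private lemma R_mix (s : Multiset α) (t : Multiset β) :
    R (s.map Sum.inl + t.map Sum.inr) = t := by
  induction s using Multiset.induction with
  | empty =>
    simp only [Multiset.map_zero, zero_add]
    induction t using Multiset.induction with
    | empty => rfl
    | cons b t ih =>
      rw [Multiset.map_cons, R,
        Multiset.filterMap_cons_some _ _ _ (rfl : Sum.getRight? (Sum.inr b) = some b)]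
      rw [R] at ih
      rw [ih]
  | cons a s ih =>
    rw [Multiset.map_cons, Multiset.cons_add, R,
      Multiset.filterMap_cons_none _ _ (rfl : Sum.getRight? (Sum.inl a) = none)]
    exact ih

end SymSumAux

/-- The `n`-th symmetric power of a sum type decomposes: an unordered `n`-tuple
of elements of `α ⊕ β` is the same as a choice of `i ≤ n` together with an
unordered `i`-tuple from `α` and an unordered `(n-i)`-tuple from `β`. -/
theorem sym_sum_equiv (α β : Type*) (n : ℕ) :
    Nonempty (Sym (α ⊕ β) n ≃
      (i : Fin (n + 1)) × (Sym α (i : ℕ) × Sym β (n - (i : ℕ)))) := by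
  constructor
  refine (Equiv.ofBijective
    (fun x : (i : Fin (n + 1)) × (Sym α (i : ℕ) × Sym β (n - (i : ℕ))) =>
      (⟨x.2.1.1.map Sum.inl + x.2.2.1.map Sum.inr, by
        have hi := x.1.isLt
        have h1 := x.2.1.2
        have h2 := x.2.2.2
        simp only [Multiset.card_add, Multiset.card_map, h1, h2]
        omega⟩ : Sym (α ⊕ β) n)) ⟨?_, ?_⟩).symm
  · rintro ⟨⟨i, hi⟩, ⟨s, hs⟩, ⟨t, ht⟩⟩ ⟨⟨j, hj⟩, ⟨u, hu⟩, ⟨v, hv⟩⟩ h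
    have hm : s.map Sum.inl + t.map Sum.inr = u.map Sum.inl + v.map Sum.inr :=
      Subtype.ext_iff.mp h
    have hsu : s = u := by
      have := congrArg SymSumAux.L hm
      rwa [SymSumAux.L_mix, SymSumAux.L_mix] at this
    have htv : t = v := by
      have := congrArg SymSumAux.R hm
      rwa [SymSumAux.R_mix, SymSumAux.R_mix] at this
    subst hsu htv
    have hij : i = j := by simpa using hs.symm.trans hu
    subst hij
    rfl
  · intro m
    obtain ⟨mm, hmc⟩ := m
    have hc := SymSumAux.card_L_add_card_R mm
    refine ⟨⟨⟨Multiset.card (SymSumAux.L mm), by omega⟩, ⟨SymSumAux.L mm, rfl⟩,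
      ⟨SymSumAux.R mm, by simp only; omega⟩⟩, Subtype.ext ?_⟩
    exact SymSumAux.recon mm
end

section
/- Let p be a prime, n ≥ 0, and let j₁, …, j_m be positive natural numbers with m ≥ 2 and j₁ + ⋯ + j_m = pⁿ. Then the multinomial coefficient (pⁿ)! / (j₁! ⋯ j_m!) is divisible by p. -/
/-- If `j₁, …, j_m` are positive naturals with `m ≥ 2` whose sum is a prime
power `p ^ n`, then the multinomial coefficient `(p^n)! / (j₁! ⋯ j_m!)` is
divisible by `p`. -/
theorem prime_dvd_multinomial_of_sum_prime_pow (p n m : ℕ) (hp : p.Prime)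
    (hm : 2 ≤ m) (j : Fin m → ℕ) (hj : ∀ i, 0 < j i)
    (hsum : ∑ i, j i = p ^ n) :
    p ∣ Nat.multinomial Finset.univ j := by
  have h1 : (1 : ℕ) < m := hm
  set i0 : Fin m := ⟨0, by omega⟩
  set i1 : Fin m := ⟨1, by omega⟩
  have hne : i0 ∉ Finset.univ.erase i0 := Finset.notMem_erase _ _
  have huniv : (Finset.univ : Finset (Fin m)) = insert i0 (Finset.univ.erase i0) :=
    (Finset.insert_erase (Finset.mem_univ i0)).symm
  have hsum' : j i0 + ∑ i ∈ Finset.univ.erase i0, j i = p ^ n := by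
    rw [← Finset.sum_insert hne, ← huniv, hsum]
  have hlt : j i0 < p ^ n := by
    have h01 : i1 ∈ Finset.univ.erase i0 := by
      simp [i0, i1, Fin.ext_iff]
    have := Finset.single_le_sum (f := j) (fun i _ => Nat.zero_le _) h01
    have := hj i1
    omega
  rw [huniv, Nat.multinomial_insert hne, hsum']
  have := hj i0
  exact Dvd.dvd.mul_right (Nat.Prime.dvd_choose_pow hp (by omega) (by omega)) _
end

section
/- Let k be a field of characteristic p > 0, let A be a commutative k-algebra, and let N = pⁿ. Consider the k-linear multiplication map μ : (A^{⊗N})^{S_N} → A from the S_N-invariants of the N-fold tensor power of A (over k) to A, induced by a₁ ⊗ ⋯ ⊗ a_N ↦ a₁⋯a_N. Then the image of μ is exactly the k-linear span of the set {a^{pⁿ} : a ∈ A}. -/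
open scoped TensorProduct

/-- The permutation action of `σ : S_N` on the `N`-fold tensor power. -/
noncomputable def permTensor (R M : Type*) [CommRing R] [AddCommGroup M] [Module R M]
    (n : ℕ) (σ : Equiv.Perm (Fin n)) :
    (⨂[R] (_ : Fin n), M) →ₗ[R] ⨂[R] (_ : Fin n), M :=
  (PiTensorProduct.reindex R (fun _ : Fin n => M) σ).toLinearMap

open PiTensorProduct

section Aux

variable {k A : Type*} [Field k] [CommRing A] [Algebra k A]
variable {ι : Type*}

/-- Coordinate functional on the tensor power associated to a function into a basis index. -/
noncomputable def coordFun (b : Module.Basis ι k A) (N : ℕ) (f : Fin N → ι) :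
    (⨂[k] (_ : Fin N), A) →ₗ[k] k :=
  PiTensorProduct.lift <| (MultilinearMap.mkPiAlgebra k (Fin N) k).compLinearMap
    fun i => b.coord (f i)

lemma coordFun_tprod (b : Module.Basis ι k A) {N : ℕ} (f : Fin N → ι) (m : Fin N → A) :
    coordFun b N f (tprod k m) = ∏ i, b.repr (m i) (f i) := by
  simp [coordFun, Module.Basis.coord_apply]

lemma coordFun_tprod_basis [DecidableEq ι] (b : Module.Basis ι k A) {N : ℕ} (f g : Fin N → ι) :
    coordFun b N f (tprod k fun i => b (g i)) = if f = g then 1 else 0 := by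
  rw [coordFun_tprod]
  by_cases h : f = g
  · subst h; simp
  · rw [if_neg h]
    obtain ⟨i, hi⟩ : ∃ i, f i ≠ g i := by
      by_contra hc; push_neg at hc; exact h (funext hc)
    refine Finset.prod_eq_zero (Finset.mem_univ i) ?_
    rw [Module.Basis.repr_self, Finsupp.single_apply, if_neg fun h' => hi h'.symm]

/-- A basis of the `N`-fold tensor power of `A` indexed by functions into a basis of `A`. -/
noncomputable def tensorBasis (b : Module.Basis ι k A) (N : ℕ) :
    Module.Basis (Fin N → ι) k (⨂[k] (_ : Fin N), A) := by
  classical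
  refine Module.Basis.mk (v := fun f => tprod k fun i => b (f i)) ?_ ?_
  · refine linearIndependent_iff.2 fun l hl => ?_
    ext f
    have h := congrArg (coordFun b N f) hl
    rw [map_zero, Finsupp.linearCombination_apply, Finsupp.sum, map_sum] at h
    simp only [map_smul, coordFun_tprod_basis, smul_eq_mul, mul_ite, mul_one, mul_zero] at h
    rw [Finset.sum_ite_eq l.support f (fun g => l g)] at h
    by_cases hf : f ∈ l.support
    · rw [if_pos hf] at h; simpa using h
    · simpa using Finsupp.notMem_support_iff.1 hf
  · rw [← PiTensorProduct.span_tprod_eq_top (R := k) (s := fun _ : Fin N => A)]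
    refine Submodule.span_le.2 ?_
    rintro x ⟨m, rfl⟩
    have hm : ∀ i, m i = ∑ j ∈ (b.repr (m i)).support, b.repr (m i) j • b j := by
      intro i
      conv_lhs => rw [← b.linearCombination_repr (m i)]
      rw [Finsupp.linearCombination_apply, Finsupp.sum]
    have h1 : (tprod k (s := fun _ : Fin N => A)) m
        = tprod k fun i => ∑ j ∈ (b.repr (m i)).support, b.repr (m i) j • b j := by
      exact congrArg _ (funext hm)
    rw [h1, (tprod k (s := fun _ : Fin N => A)).map_sum_finset]
    refine Submodule.sum_mem _ fun r _ => ?_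
    rw [(tprod k (s := fun _ : Fin N => A)).map_smul_univ]
    exact Submodule.smul_mem _ _ (Submodule.subset_span ⟨r, rfl⟩)

lemma tensorBasis_apply (b : Module.Basis ι k A) {N : ℕ} (f : Fin N → ι) :
    tensorBasis b N f = tprod k fun i => b (f i) := by
  simp [tensorBasis]

lemma tensorBasis_repr_eq [DecidableEq ι] (b : Module.Basis ι k A) {N : ℕ} (f : Fin N → ι)
    (z : ⨂[k] (_ : Fin N), A) :
    (tensorBasis b N).repr z f = coordFun b N f z := by
  have h : (Finsupp.lapply f).comp ((tensorBasis b N).repr : (⨂[k] (_ : Fin N), A) →ₗ[k] _)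
      = coordFun b N f := by
    refine Module.Basis.ext (tensorBasis b N) fun g => ?_
    rw [LinearMap.comp_apply, LinearEquiv.coe_coe, Module.Basis.repr_self]
    rw [tensorBasis_apply, coordFun_tprod_basis]
    simp [Finsupp.single_apply, eq_comm]
  exact (DFunLike.congr_fun h z : _)

lemma coordFun_comp_perm [DecidableEq ι] (b : Module.Basis ι k A) {N : ℕ} (σ : Equiv.Perm (Fin N)) (f : Fin N → ι) :
    (coordFun b N f).comp (permTensor k A N σ) = coordFun b N (f ∘ σ) := by
  refine Module.Basis.ext (tensorBasis b N) fun g => ?_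
  rw [LinearMap.comp_apply, tensorBasis_apply, permTensor, LinearEquiv.coe_coe,
    PiTensorProduct.reindex_tprod, coordFun_tprod_basis, coordFun_tprod_basis]
  have : (f = fun i => g (σ.symm i)) ↔ f ∘ σ = g := σ.eq_comp_symm f g
  exact if_congr this rfl rfl

/-- The combinatorial core: a translation-invariant sum over functions `Fin (p^n) → ι`
lies in any submodule containing the values at constant functions. -/
lemma sum_invariant_mem {k M : Type*} [Field k] [AddCommGroup M] [Module k M]
    (p n : ℕ) (hp : p.Prime) [CharP k p] {ι : Type*}
    (T : (Fin (p ^ n) → ι) → M) (S : Finset (Fin (p ^ n) → ι)) (W : Submodule k M)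
    (hT : ∀ (d : Fin (p ^ n)) f, T (fun i => f (d + i)) = T f)
    (hS : ∀ (d : Fin (p ^ n)) f, f ∈ S → (fun i => f (d + i)) ∈ S)
    (hW : ∀ j : ι, T (fun _ => j) ∈ W) :
    ∑ f ∈ S, T f ∈ W := by
  classical
  haveI : NeZero (p ^ n) := ⟨pow_ne_zero n hp.ne_zero⟩
  let N := p ^ n
  let tr : Fin N → (Fin N → ι) → (Fin N → ι) := fun d f i => f (d + i)
  let orb : (Fin N → ι) → Finset (Fin N → ι) := fun f => Finset.image (fun d => tr d f) Finset.univ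
  have htr0 : ∀ f, tr 0 f = f := fun f => funext fun i => by simp [tr]
  have htrtr : ∀ d e f, tr e (tr d f) = tr (d + e) f := fun d e f => funext fun i => by
    simp [tr, add_assoc]
  have hmem_self : ∀ f, f ∈ orb f := fun f =>
    Finset.mem_image.2 ⟨0, Finset.mem_univ _, htr0 f⟩
  have horb_tr : ∀ d f, orb (tr d f) = orb f := by
    intro d f
    ext g
    simp only [orb, Finset.mem_image, Finset.mem_univ, true_and]
    constructor
    · rintro ⟨e, rfl⟩; exact ⟨d + e, (htrtr d e f).symm⟩
    · rintro ⟨e, rfl⟩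
      refine ⟨-d + e, ?_⟩
      rw [htrtr, add_neg_cancel_left]
  have horb_eq : ∀ f g, f ∈ orb g → orb f = orb g := by
    intro f g hf
    simp only [orb, Finset.mem_image, Finset.mem_univ, true_and] at hf
    obtain ⟨d, rfl⟩ := hf
    exact horb_tr d g
  have key : ∑ O ∈ S.image orb, ∑ f ∈ S.filter (fun f => orb f = O), T f = ∑ f ∈ S, T f :=
    Finset.sum_fiberwise_of_maps_to (fun f hf => Finset.mem_image_of_mem orb hf) T
  rw [← key]
  refine Submodule.sum_mem _ fun O hO => ?_
  obtain ⟨g, hgS, rfl⟩ := Finset.mem_image.1 hO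
  have hfilter : S.filter (fun f => orb f = orb g) = orb g := by
    ext f
    simp only [Finset.mem_filter]
    constructor
    · rintro ⟨hfS, h⟩; rw [← h]; exact hmem_self f
    · intro hf
      refine ⟨?_, horb_eq f g hf⟩
      have hf' := hf
      simp only [orb, Finset.mem_image, Finset.mem_univ, true_and] at hf'
      obtain ⟨d, rfl⟩ := hf'
      exact hS d g hgS
  rw [hfilter]
  have hconstsum : ∑ f ∈ orb g, T f = (orb g).card • T g := by
    rw [← Finset.sum_const]
    refine Finset.sum_congr rfl fun f hf => ?_
    simp only [orb, Finset.mem_image, Finset.mem_univ, true_and] at hf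
    obtain ⟨d, rfl⟩ := hf
    exact hT d g
  rw [hconstsum]
  -- the orbit cardinality divides `p ^ n`
  have hcard : (orb g).card ∣ N := by
    have e1 : (↑(orb g) : Set (Fin N → ι)) = AddAction.orbit (Fin N)ᵈᵃᵃ g := by
      ext f
      simp only [orb, Finset.coe_image, Finset.coe_univ, Set.image_univ, Set.mem_range,
        AddAction.mem_orbit_iff]
      constructor
      · rintro ⟨d, rfl⟩; exact ⟨DomAddAct.mk d, rfl⟩
      · rintro ⟨c, rfl⟩; exact ⟨DomAddAct.mk.symm c, rfl⟩
    have e2 : (orb g).card = Nat.card (AddAction.orbit (Fin N)ᵈᵃᵃ g) := by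
      rw [← e1, Nat.card_coe_set_eq, Set.ncard_coe_finset]
    have e3 : Nat.card (AddAction.orbit (Fin N)ᵈᵃᵃ g) ∣ Nat.card (Fin N)ᵈᵃᵃ := by
      rw [Nat.card_congr (AddAction.orbitEquivQuotientStabilizer (Fin N)ᵈᵃᵃ g)]
      exact AddSubgroup.card_quotient_dvd_card _
    have e4 : Nat.card (Fin N)ᵈᵃᵃ = N := by
      rw [Nat.card_congr DomAddAct.mk.symm, Nat.card_eq_fintype_card, Fintype.card_fin]
    rw [e4] at e3
    rw [e2]
    exact e3
  obtain ⟨m, _, hcm⟩ := (Nat.dvd_prime_pow hp).1 hcard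
  rcases Nat.eq_zero_or_pos m with hm0 | hmpos
  · -- orbit has one element : `g` is constant
    subst hm0
    rw [pow_zero] at hcm
    obtain ⟨f₀, hf₀⟩ := Finset.card_eq_one.1 hcm
    have hg : ∀ d, tr d g = g := by
      intro d
      have h1 : tr d g ∈ orb g := Finset.mem_image.2 ⟨d, Finset.mem_univ _, rfl⟩
      have h2 := hmem_self g
      rw [hf₀, Finset.mem_singleton] at h1 h2
      rw [h1, ← h2]
    have hgc : g = fun _ => g 0 := by
      funext d
      have h := congrFun (hg d) 0
      simpa [tr] using h
    rw [hcm, one_smul, show T g = T (fun _ => g 0) by rw [← hgc]]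
    exact hW (g 0)
  · -- orbit cardinality is divisible by `p`
    have hpd : p ∣ (orb g).card := hcm ▸ dvd_pow_self p hmpos.ne'
    obtain ⟨t, ht⟩ := hpd
    have hp0 : p • T g = (0 : M) := by
      rw [← Nat.cast_smul_eq_nsmul k, CharP.cast_eq_zero, zero_smul]
    rw [ht, mul_nsmul, hp0, smul_zero]
    exact W.zero_mem

end Aux

/-- Let `k` be a field of characteristic `p > 0` and `A` a commutative
`k`-algebra. The image of the multiplication map
`μ : (A^{⊗ pⁿ})^{S_{pⁿ}} → A` from the symmetric invariants of the `pⁿ`-fold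
tensor power to `A` is exactly the `k`-linear span of `{a ^ pⁿ : a ∈ A}`. -/
theorem range_mul_on_symmetric_invariants (k A : Type*) [Field k] [CommRing A]
    [Algebra k A] (p : ℕ) [CharP k p] (hp : p ≠ 0) (n : ℕ) :
    LinearMap.range
      ((PiTensorProduct.lift (MultilinearMap.mkPiAlgebra k (Fin (p ^ n)) A)).comp
        (⨅ σ : Equiv.Perm (Fin (p ^ n)),
          LinearMap.eqLocus (permTensor k A (p ^ n) σ) LinearMap.id).subtype) =
      Submodule.span k {x : A | ∃ a : A, x = a ^ (p ^ n)} := by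
  classical
  have hpp : p.Prime := (CharP.char_is_prime_or_zero k p).resolve_right hp
  haveI : NeZero (p ^ n) := ⟨pow_ne_zero n hpp.ne_zero⟩
  apply le_antisymm
  · rintro x ⟨⟨z, hz⟩, rfl⟩
    rw [Submodule.mem_iInf] at hz
    have hzinv : ∀ σ : Equiv.Perm (Fin (p ^ n)), permTensor k A (p ^ n) σ z = z := fun σ =>
      LinearMap.mem_eqLocus.1 (hz σ)
    set b := Module.Basis.ofVectorSpace k A with hb
    set c := (tensorBasis b (p ^ n)).repr z with hc
    have hcinv : ∀ (d : Fin (p ^ n)) f, c (fun i => f (d + i)) = c f := by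
      intro d f
      have h1 : (fun i => f (d + i)) = f ∘ (Equiv.addLeft d) := rfl
      rw [hc, h1, tensorBasis_repr_eq, tensorBasis_repr_eq, ← coordFun_comp_perm,
        LinearMap.comp_apply, hzinv]
    have hz_eq : PiTensorProduct.lift (MultilinearMap.mkPiAlgebra k (Fin (p ^ n)) A) z
        = ∑ f ∈ c.support, c f • ∏ i, b (f i) := by
      conv_lhs => rw [← (tensorBasis b (p ^ n)).linearCombination_repr z]
      rw [Finsupp.linearCombination_apply, Finsupp.sum, map_sum]
      refine Finset.sum_congr rfl fun f _ => ?_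
      rw [map_smul, tensorBasis_apply, PiTensorProduct.lift.tprod,
        MultilinearMap.mkPiAlgebra_apply]
    simp only [LinearMap.comp_apply, Submodule.coe_subtype]
    rw [hz_eq]
    refine sum_invariant_mem p n hpp (fun f => c f • ∏ i, b (f i)) c.support _ ?_ ?_ ?_
    · intro d f
      dsimp only
      rw [hcinv]
      congr 1
      exact Equiv.prod_comp (Equiv.addLeft d) fun i => b (f i)
    · intro d f hf
      rw [Finsupp.mem_support_iff] at hf ⊢
      rw [hcinv]; exact hf
    · intro j
      dsimp only
      refine Submodule.smul_mem _ _ (Submodule.subset_span ⟨b j, ?_⟩)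
      rw [Finset.prod_const, Finset.card_univ, Fintype.card_fin]
  · rw [Submodule.span_le]
    rintro x ⟨a, rfl⟩
    refine ⟨⟨tprod k fun _ => a, ?_⟩, ?_⟩
    · rw [Submodule.mem_iInf]
      intro σ
      rw [LinearMap.mem_eqLocus, permTensor, LinearEquiv.coe_coe,
        PiTensorProduct.reindex_tprod, LinearMap.id_apply]
    · simp only [LinearMap.comp_apply, Submodule.coe_subtype, PiTensorProduct.lift.tprod,
        MultilinearMap.mkPiAlgebra_apply, Finset.prod_const, Finset.card_univ, Fintype.card_fin]
end

section
/- Let F be a field and let M* and N* be nonnegatively graded modules over the polynomial ring F[τ] with τ in degree 1, which are free as F[τ]-modules, and let u : M* → N* be a degree-preserving F[τ]-module homomorphism. If the induced map u ⊗_{F[τ], τ↦1} F : M* ⊗ F → N* ⊗ F (specializing τ to 1) is surjective and the induced map u ⊗_{F[τ], τ↦0} F (specializing τ to 0) is injective, then u is an isomorphism. -/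
/-- Iterated application of the degree-raising maps of a nonnegatively graded
`F[τ]`-module presented as a sequence of `F`-vector spaces with connecting
maps. -/
def iterShift {F : Type*} [Field F] {N : ℕ → Type*} [∀ n, AddCommGroup (N n)]
    [∀ n, Module F (N n)] (τ : ∀ n, N n →ₗ[F] N (n + 1)) :
    ∀ (k n : ℕ), N n →ₗ[F] N (n + k)
  | 0, _ => LinearMap.id
  | (k + 1), n => (τ (n + k)).comp (iterShift τ k n)

/-- A nonnegatively graded `F[τ]`-module (deg τ = 1) is presented as a sequence
of `F`-vector spaces `M n` together with the multiplication-by-`τ` maps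
`τM n : M n → M (n+1)`; over a field, such a module is free with a homogeneous
basis iff all the maps `τM n` are injective.  If `u : M* → N*` is a morphism of
such graded modules, both free, such that `u ⊗_{τ↦1} F` is surjective (every
`y ∈ N n` is hit by `u` after multiplying by some power of `τ`) and
`u ⊗_{τ↦0} F` is injective (in each degree `u` is injective modulo `τ`), then
`u` is an isomorphism. -/
theorem graded_free_module_iso (F : Type*) [Field F]
    (M N : ℕ → Type*) [∀ n, AddCommGroup (M n)] [∀ n, Module F (M n)]
    [∀ n, AddCommGroup (N n)] [∀ n, Module F (N n)]
    (τM : ∀ n, M n →ₗ[F] M (n + 1)) (τN : ∀ n, N n →ₗ[F] N (n + 1))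
    (hMfree : ∀ n, Function.Injective (τM n))
    (hNfree : ∀ n, Function.Injective (τN n))
    (u : ∀ n, M n →ₗ[F] N n)
    (hu : ∀ (n : ℕ) (x : M n), u (n + 1) (τM n x) = τN n (u n x))
    (hsurj1 : ∀ (n : ℕ) (y : N n), ∃ (k : ℕ) (x : M (n + k)),
      u (n + k) x = iterShift τN k n y)
    (hinj0zero : Function.Injective (u 0))
    (hinj0 : ∀ (n : ℕ) (x : M (n + 1)),
      (∃ z : N n, τN n z = u (n + 1) x) → ∃ w : M n, τM n w = x) :
    ∀ n, Function.Bijective (u n) := by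
  have key : ∀ (k n : ℕ) (y : N n) (x : M (n + k)),
      u (n + k) x = iterShift τN k n y → ∃ x', u n x' = y := by
    intro k
    induction k with
    | zero => intro n y x h; exact ⟨x, h⟩
    | succ k ih =>
      intro n y x h
      simp only [iterShift, LinearMap.comp_apply] at h
      obtain ⟨w, hw⟩ := hinj0 (n + k) x ⟨iterShift τN k n y, h.symm⟩
      have h2 : τN (n + k) (u (n + k) w) = τN (n + k) (iterShift τN k n y) := by
        rw [← hu, hw]; exact h
      exact ih n y w (hNfree _ h2)
  have inj : ∀ n, Function.Injective (u n) := by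
    intro n
    induction n with
    | zero => exact hinj0zero
    | succ n ih =>
      rw [injective_iff_map_eq_zero]
      intro x hx
      obtain ⟨w, hw⟩ := hinj0 n x ⟨0, by simp [hx]⟩
      have h1 : u n w = 0 := hNfree n (by rw [← hu, hw, hx]; simp)
      have h2 : w = 0 := ih (by simp [h1])
      rw [← hw, h2, map_zero]
  intro n
  refine ⟨inj n, fun y => ?_⟩
  obtain ⟨k, x, hx⟩ := hsurj1 n y
  exact key k n y x hx
end

section
/- Let k be a field (or any commutative ring), and let B = k[x, y, (xy)⁻¹] be the localization of the polynomial ring k[x,y] at the element xy, with the k-algebra involution σ swapping x and y. Then the subalgebra of σ-invariant elements of B is exactly the k-subalgebra generated by x + y, xy and (xy)⁻¹. (Geometrically: the symmetric square of 𝔸¹ ∖ {0} is 𝔸¹ × (𝔸¹ ∖ {0}).) -/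
open MvPolynomial

/-- The ring `B = k[x,y,(xy)⁻¹]`. -/
abbrev LocXY (k : Type*) [CommRing k] : Type _ :=
  Localization.Away (X 0 * X 1 : MvPolynomial (Fin 2) k)

/-- The image of `x` in `B`. -/
noncomputable def xB (k : Type*) [CommRing k] : LocXY k :=
  algebraMap (MvPolynomial (Fin 2) k) (LocXY k) (X 0)

/-- The image of `y` in `B`. -/
noncomputable def yB (k : Type*) [CommRing k] : LocXY k :=
  algebraMap (MvPolynomial (Fin 2) k) (LocXY k) (X 1)

/-- The image of `xy` in `B`. -/
noncomputable def xyB (k : Type*) [CommRing k] : LocXY k :=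
  algebraMap (MvPolynomial (Fin 2) k) (LocXY k) (X 0 * X 1)

/-- The inverse `(xy)⁻¹` in `B`. -/
noncomputable def xyInv (k : Type*) [CommRing k] : LocXY k :=
  IsLocalization.Away.invSelf (S := LocXY k) (X 0 * X 1 : MvPolynomial (Fin 2) k)

section Aux

variable (k : Type*) [CommRing k]

private lemma swap_fixes_w :
    (renameEquiv k (Equiv.swap (0 : Fin 2) 1)) (X 0 * X 1 : MvPolynomial (Fin 2) k)
      = X 0 * X 1 := by
  simp [renameEquiv, Equiv.swap_apply_left, Equiv.swap_apply_right, mul_comm]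

private lemma w_nzd :
    (X 0 * X 1 : MvPolynomial (Fin 2) k) ∈ nonZeroDivisors (MvPolynomial (Fin 2) k) := by
  have hX : ∀ i : Fin 2, (X i : MvPolynomial (Fin 2) k)
      ∈ nonZeroDivisors (MvPolynomial (Fin 2) k) := by
    intro i
    rw [mem_nonZeroDivisors_iff_right]
    intro p hp
    ext m
    have := congrArg (coeff (m + Finsupp.single i 1)) hp
    rwa [coeff_mul_X, coeff_zero] at this
  exact mul_mem (hX 0) (hX 1)

private lemma esymm_two_one : esymm (Fin 2) k 1 = X 0 + X 1 := by
  rw [esymm_one, Fin.sum_univ_two]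

private lemma esymm_two_two : esymm (Fin 2) k 2 = X 0 * X 1 := by
  have h : (Finset.univ.powersetCard 2 : Finset (Finset (Fin 2))) = {Finset.univ} := by decide
  rw [esymm, h, Finset.sum_singleton, Fin.prod_univ_two]

end Aux

/-- There is a `k`-algebra involution `σ` of `B = k[x,y,(xy)⁻¹]` swapping `x`
and `y`, and for any such `σ` the set of `σ`-invariant elements of `B` is
exactly the `k`-subalgebra generated by `x + y`, `xy` and `(xy)⁻¹`. -/
theorem invariants_of_swap_on_localization (k : Type*) [CommRing k] :
    (∃ σ : LocXY k ≃ₐ[k] LocXY k, σ (xB k) = yB k ∧ σ (yB k) = xB k) ∧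
    ∀ σ : LocXY k ≃ₐ[k] LocXY k, σ (xB k) = yB k → σ (yB k) = xB k →
      {b : LocXY k | σ b = b} =
        (Algebra.adjoin k {xB k + yB k, xyB k, xyInv k} : Set (LocXY k)) := by
  set R := MvPolynomial (Fin 2) k with hR
  set sw : MvPolynomial (Fin 2) k ≃ₐ[k] MvPolynomial (Fin 2) k :=
    renameEquiv k (Equiv.swap (0 : Fin 2) 1) with hswdef
  have hswX0 : sw (X 0) = X 1 := by
    simp [hswdef, renameEquiv, Equiv.swap_apply_left]
  have hswX1 : sw (X 1) = X 0 := by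
    simp [hswdef, renameEquiv, Equiv.swap_apply_right]
  have hsww : sw (X 0 * X 1 : MvPolynomial (Fin 2) k) = X 0 * X 1 := swap_fixes_w k
  constructor
  · -- existence
    have hmap : Submonoid.map sw
        (Submonoid.powers (X 0 * X 1 : MvPolynomial (Fin 2) k))
        = Submonoid.powers (X 0 * X 1 : MvPolynomial (Fin 2) k) := by
      rw [Submonoid.map_powers, hsww]
    refine ⟨IsLocalization.algEquivOfAlgEquiv (LocXY k) (LocXY k) sw hmap, ?_, ?_⟩
    · rw [xB, IsLocalization.algEquivOfAlgEquiv_eq, hswX0]; rfl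
    · rw [yB, IsLocalization.algEquivOfAlgEquiv_eq, hswX1]; rfl
  · intro σ h0 h1
    have hxy : xyB k = xB k * yB k := map_mul _ _ _
    have hunit : xyB k * xyInv k = 1 :=
      IsLocalization.Away.mul_invSelf (X 0 * X 1 : MvPolynomial (Fin 2) k)
    have hσxy : σ (xyB k) = xyB k := by
      rw [hxy, map_mul, h0, h1, mul_comm]
    have hσinv : σ (xyInv k) = xyInv k := by
      have h2 : xyB k * σ (xyInv k) = 1 := by
        have := congrArg σ hunit
        rwa [map_mul, map_one, hσxy] at this
      calc σ (xyInv k) = σ (xyInv k) * (xyB k * xyInv k) := by rw [hunit, mul_one]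
        _ = (xyB k * σ (xyInv k)) * xyInv k := by ring
        _ = xyInv k := by rw [h2, one_mul]
    -- σ composed with algebraMap is algebraMap ∘ sw
    have key : ∀ q : MvPolynomial (Fin 2) k,
        σ (algebraMap (MvPolynomial (Fin 2) k) (LocXY k) q)
          = algebraMap (MvPolynomial (Fin 2) k) (LocXY k) (sw q) := by
      intro q
      have hcomp : (σ.toAlgHom.comp (IsScalarTower.toAlgHom k (MvPolynomial (Fin 2) k) (LocXY k)))
          = (IsScalarTower.toAlgHom k (MvPolynomial (Fin 2) k) (LocXY k)).comp sw.toAlgHom := by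
        apply MvPolynomial.algHom_ext
        intro i
        fin_cases i
        · show σ (algebraMap (MvPolynomial (Fin 2) k) (LocXY k) (X 0))
            = algebraMap (MvPolynomial (Fin 2) k) (LocXY k) (sw (X 0))
          rw [hswX0]; exact h0
        · show σ (algebraMap (MvPolynomial (Fin 2) k) (LocXY k) (X 1))
            = algebraMap (MvPolynomial (Fin 2) k) (LocXY k) (sw (X 1))
          rw [hswX1]; exact h1
      exact DFunLike.congr_fun hcomp q
    ext b
    simp only [Set.mem_setOf_eq, SetLike.mem_coe]
    constructor
    · -- invariant → in adjoin
      intro hb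
      obtain ⟨⟨p, s⟩, hps⟩ := IsLocalization.surj
        (M := Submonoid.powers (X 0 * X 1 : MvPolynomial (Fin 2) k)) b
      obtain ⟨n, hn⟩ := s.2
      simp only at hps
      have hn' : (X 0 * X 1 : MvPolynomial (Fin 2) k) ^ n = s.1 := hn
      have hbs : b * xyB k ^ n = algebraMap (MvPolynomial (Fin 2) k) (LocXY k) p := by
        rw [xyB, ← map_pow, hn']; exact hps
      have hinvn : xyB k ^ n * xyInv k ^ n = 1 := by
        rw [← mul_pow, hunit, one_pow]
      have hb' : b = algebraMap (MvPolynomial (Fin 2) k) (LocXY k) p * xyInv k ^ n := by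
        calc b = b * (xyB k ^ n * xyInv k ^ n) := by rw [hinvn, mul_one]
          _ = (b * xyB k ^ n) * xyInv k ^ n := by ring
          _ = _ := by rw [hbs]
      -- invariance gives sw p = p
      have hσb : σ b = algebraMap (MvPolynomial (Fin 2) k) (LocXY k) (sw p) * xyInv k ^ n := by
        rw [hb', map_mul, map_pow, hσinv, key]
      have heq : algebraMap (MvPolynomial (Fin 2) k) (LocXY k) (sw p)
          = algebraMap (MvPolynomial (Fin 2) k) (LocXY k) p := by
        have h3 : algebraMap (MvPolynomial (Fin 2) k) (LocXY k) (sw p) * xyInv k ^ n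
            = algebraMap (MvPolynomial (Fin 2) k) (LocXY k) p * xyInv k ^ n := by
          rw [← hσb, hb, hb']
        calc algebraMap (MvPolynomial (Fin 2) k) (LocXY k) (sw p)
            = algebraMap (MvPolynomial (Fin 2) k) (LocXY k) (sw p)
              * (xyInv k ^ n * xyB k ^ n) := by rw [mul_comm (xyInv k ^ n), hinvn, mul_one]
          _ = (algebraMap (MvPolynomial (Fin 2) k) (LocXY k) (sw p) * xyInv k ^ n)
              * xyB k ^ n := by ring
          _ = (algebraMap (MvPolynomial (Fin 2) k) (LocXY k) p * xyInv k ^ n)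
              * xyB k ^ n := by rw [h3]
          _ = algebraMap (MvPolynomial (Fin 2) k) (LocXY k) p
              * (xyInv k ^ n * xyB k ^ n) := by ring
          _ = _ := by rw [mul_comm (xyInv k ^ n), hinvn, mul_one]
      have hswp : sw p = p := by
        have hinj : Function.Injective
            (algebraMap (MvPolynomial (Fin 2) k) (LocXY k)) :=
          IsLocalization.injective (LocXY k) (Submonoid.powers_le.mpr (w_nzd k))
        exact hinj heq
      -- p is symmetric
      have hpsymm : p ∈ symmetricSubalgebra (Fin 2) k := by
        rw [mem_symmetricSubalgebra]
        intro e
        have he : e = 1 ∨ e = Equiv.swap 0 1 := by revert e; decide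
        rcases he with rfl | rfl
        · simp [rename_id]
        · exact hswp
      -- fundamental theorem
      obtain ⟨q, hq⟩ := esymmAlgHom_surjective (σ := Fin 2) (R := k) (n := 2)
        (by simp) ⟨p, hpsymm⟩
      have hpq : p = aeval (fun i : Fin 2 => esymm (Fin 2) k (i + 1)) q := by
        have := congrArg Subtype.val hq
        rw [esymmAlgHom_apply] at this
        exact this.symm
      -- push to the localization
      set φ : MvPolynomial (Fin 2) k →ₐ[k] LocXY k :=
        IsScalarTower.toAlgHom k (MvPolynomial (Fin 2) k) (LocXY k) with hφ
      have hmem : φ p ∈ Algebra.adjoin k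
          (Set.range (fun i : Fin 2 => φ (esymm (Fin 2) k (i + 1)))) := by
        rw [hpq, comp_aeval_apply, Algebra.adjoin_range_eq_range_aeval]
        exact ⟨q, rfl⟩
      have hg0 : φ (esymm (Fin 2) k (0 + 1)) = xB k + yB k := by
        rw [show (0 + 1 : ℕ) = 1 from rfl, esymm_two_one k, map_add]; rfl
      have hg1 : φ (esymm (Fin 2) k (1 + 1)) = xyB k := by
        rw [show (1 + 1 : ℕ) = 2 from rfl, esymm_two_two k]; rfl
      have hsub : ∀ i : Fin 2, φ (esymm (Fin 2) k (i + 1))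
          ∈ ({xB k + yB k, xyB k, xyInv k} : Set (LocXY k)) := by
        intro i
        fin_cases i
        · show φ (esymm (Fin 2) k (0 + 1)) ∈ _
          rw [hg0]; exact Set.mem_insert _ _
        · show φ (esymm (Fin 2) k (1 + 1)) ∈ _
          rw [hg1]; exact Set.mem_insert_of_mem _ (Set.mem_insert _ _)
      have hpin : φ p ∈ Algebra.adjoin k {xB k + yB k, xyB k, xyInv k} :=
        Algebra.adjoin_mono (Set.range_subset_iff.mpr hsub) hmem
      have hinvmem : xyInv k ∈ Algebra.adjoin k {xB k + yB k, xyB k, xyInv k} :=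
        Algebra.subset_adjoin (by simp)
      rw [hb']
      exact mul_mem hpin (pow_mem hinvmem n)
    · -- adjoin → invariant
      intro hb
      have hle : Algebra.adjoin k {xB k + yB k, xyB k, xyInv k}
          ≤ AlgHom.equalizer σ.toAlgHom (AlgHom.id k (LocXY k)) := by
        rw [Algebra.adjoin_le_iff]
        rintro x (rfl | rfl | rfl)
        · show σ (xB k + yB k) = xB k + yB k
          rw [map_add, h0, h1, add_comm]
        · exact hσxy
        · exact hσinv
      exact hle hb
end
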